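/- Let p be a prime, d ≥ 1 an integer, ε ∈ {0,1}^{d-1} a fixed vector, and a = (a_1,...,a_d), b = (b_1,...,b_d) ∈ ℤ_p^d with a_1 ≢ 0 (mod p) and b_1 ≢ 0 (mod p). Then P^{a,ε}_{d,p} = P^{b,ε}_{d,p} if and only if there exists c ∈ {1,...,p-1} such that b_j c^j ≡ a_j (mod p) for all j = 1,...,d. -/

import Mathlib

/-- The `i`-th coordinate (for `i = 1,…,d`) of the `j`-th point of the generalized
`p`-set with parameters `a` and `ε` (and `a'_h = ε_h * a_h`), namely the fractional
part of `(∑_{h=1}^{i-1} a'_h j^h + a_i j^i) / N`. -/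
noncomputable def genCoord (N : ℕ) (a ε : ℕ → ℤ) (j i : ℕ) : ℝ :=
  Int.fract ((((∑ h ∈ Finset.Ico 1 i, ε h * a h * (j : ℤ) ^ h) + a i * (j : ℤ) ^ i : ℤ) : ℝ) / (N : ℝ))

/-- The point `x_j^{a,ε} ∈ [0,1)^d` of the generalized `p`-set. -/
noncomputable def genPoint (p d : ℕ) (a ε : ℕ → ℤ) (j : ℕ) : Fin d → ℝ :=
  fun i => genCoord p a ε j (i.1 + 1)

/-- The generalized `p`-set `P^{a,ε}_{d,p} = {x_j^{a,ε} : j = 0,…,p-1} ⊂ [0,1)^d`. -/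
noncomputable def genPset (p d : ℕ) (a ε : ℕ → ℤ) : Set (Fin d → ℝ) :=
  {x | ∃ j < p, x = genPoint p d a ε j}

/-- For a fixed `ε ∈ {0,1}^{d-1}` and `a, b ∈ ℤ_p^d` with `a₁, b₁ ≢ 0 (mod p)`, the
generalized `p`-sets coincide, `P^{a,ε}_{d,p} = P^{b,ε}_{d,p}`, if and only if there is
`c ∈ {1,…,p-1}` with `b_j c^j ≡ a_j (mod p)` for all `j = 1,…,d`. -/
def Sz (a ε : ℕ → ℤ) (j i : ℕ) : ℤ :=
  (∑ h ∈ Finset.Ico 1 i, ε h * a h * (j : ℤ) ^ h) + a i * (j : ℤ) ^ i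

lemma fract_div_eq_iff (p : ℕ) (hp : p ≠ 0) (m n : ℤ) :
    Int.fract ((m : ℝ) / p) = Int.fract ((n : ℝ) / p) ↔ ((m : ZMod p) = (n : ZMod p)) := by
  have hp' : (p : ℝ) ≠ 0 := Nat.cast_ne_zero.mpr hp
  rw [Int.fract_eq_fract, ZMod.intCast_eq_intCast_iff, Int.modEq_iff_dvd]
  constructor
  · rintro ⟨z, hz⟩
    refine ⟨-z, ?_⟩
    have : (m : ℝ) - n = z * p := by field_simp at hz; linarith
    have h2 : ((n - m : ℤ) : ℝ) = ((p * -z : ℤ) : ℝ) := by push_cast; linarith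
    exact_mod_cast h2
  · rintro ⟨z, hz⟩
    refine ⟨-z, ?_⟩
    have : (n : ℝ) - m = p * z := by exact_mod_cast congrArg (Int.cast : ℤ → ℝ) hz
    push_cast
    field_simp
    linarith

lemma point_eq_iff (p d : ℕ) (hp : p ≠ 0) (a b ε : ℕ → ℤ) (j j' : ℕ) :
    genPoint p d a ε j = genPoint p d b ε j' ↔
      ∀ i ∈ Finset.Icc 1 d, ((Sz a ε j i : ZMod p) = (Sz b ε j' i : ZMod p)) := by
  rw [funext_iff]
  constructor
  · intro h i hi
    simp only [Finset.mem_Icc] at hi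
    have := h ⟨i - 1, by omega⟩
    simp only [genPoint, genCoord] at this
    have hi1 : i - 1 + 1 = i := by omega
    rw [hi1] at this
    exact (fract_div_eq_iff p hp _ _).mp this
  · intro h i
    exact (fract_div_eq_iff p hp _ _).mpr (h (i.1 + 1) (by simp [Finset.mem_Icc]))

lemma pset_subset (p d : ℕ) (hp : p ≠ 0) (a b ε : ℕ → ℤ) (c : ZMod p)
    (hc : ∀ i ∈ Finset.Icc 1 d, (b i : ZMod p) * c ^ i = (a i : ZMod p)) :
    genPset p d a ε ⊆ genPset p d b ε := by
  haveI : NeZero p := ⟨hp⟩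
  rintro x ⟨j, hj, rfl⟩
  refine ⟨(c * (j : ZMod p)).val, ZMod.val_lt _, ?_⟩
  rw [point_eq_iff p d hp]
  intro i hi
  have hj' : (((c * (j : ZMod p)).val : ℕ) : ZMod p) = c * (j : ZMod p) := by
    rw [ZMod.natCast_val, ZMod.cast_id]
  simp only [Finset.mem_Icc] at hi
  simp only [Sz]
  push_cast
  rw [hj']
  refine congrArg₂ (· + ·) (Finset.sum_congr rfl ?_) ?_
  · intro h hh
    simp only [Finset.mem_Ico] at hh
    rw [mul_pow, ← hc h (by simp [Finset.mem_Icc]; omega)]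
    ring
  · rw [mul_pow, ← hc i (by simp [Finset.mem_Icc]; omega)]
    ring

theorem gen_pset_eq_iff (p d : ℕ) (hp : p.Prime) (hd : 1 ≤ d) (ε : ℕ → ℤ)
    (hε : ∀ i ∈ Finset.Icc 1 (d - 1), ε i = 0 ∨ ε i = 1) (a b : ℕ → ℤ)
    (ha : ∀ i ∈ Finset.Icc 1 d, 0 ≤ a i ∧ a i ≤ (p : ℤ) - 1)
    (hb : ∀ i ∈ Finset.Icc 1 d, 0 ≤ b i ∧ b i ≤ (p : ℤ) - 1)
    (ha1 : ¬ ((p : ℤ) ∣ a 1)) (hb1 : ¬ ((p : ℤ) ∣ b 1)) :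
    genPset p d a ε = genPset p d b ε ↔
      ∃ c : ℤ, 1 ≤ c ∧ c ≤ (p : ℤ) - 1 ∧
        ∀ j ∈ Finset.Icc 1 d, b j * c ^ j ≡ a j [ZMOD (p : ℤ)] := by
  have hp0 : p ≠ 0 := hp.ne_zero
  have h1p : 1 < p := hp.one_lt
  haveI : Fact p.Prime := ⟨hp⟩
  constructor
  · intro hset
    have hmem : genPoint p d a ε 1 ∈ genPset p d b ε := by
      rw [← hset]; exact ⟨1, h1p, rfl⟩
    obtain ⟨j0, hj0p, hpt⟩ := hmem
    have hco := (point_eq_iff p d hp0 a b ε 1 j0).mp hpt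
    have key : ∀ i, i ∈ Finset.Icc 1 d → (b i : ZMod p) * (j0 : ZMod p) ^ i = (a i : ZMod p) := by
      intro i
      induction i using Nat.strong_induction_on with
      | _ i IH =>
        intro hi
        have hc := hco i hi
        simp only [Finset.mem_Icc] at hi
        simp only [Sz] at hc
        push_cast at hc
        rw [Finset.sum_congr rfl (fun h hh => by
          simp only [Finset.mem_Ico] at hh
          show (ε h : ZMod p) * a h * (1 : ZMod p) ^ h = (ε h : ZMod p) * b h * (j0 : ZMod p) ^ h
          rw [← IH h hh.2 (by simp [Finset.mem_Icc]; omega)]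
          ring)] at hc
        have := add_left_cancel hc
        rw [one_pow] at this
        rw [← this]; ring
    have hj0ne : (j0 : ZMod p) ≠ 0 := by
      intro h0
      have := key 1 (by simp [Finset.mem_Icc]; omega)
      rw [h0] at this
      simp at this
      exact ha1 ((ZMod.intCast_zmod_eq_zero_iff_dvd _ _).mp this.symm)
    have hj00 : j0 ≠ 0 := by
      intro h; subst h; simp at hj0ne
    refine ⟨(j0 : ℤ), by exact_mod_cast Nat.one_le_iff_ne_zero.mpr hj00, by omega, ?_⟩
    intro i hi
    rw [← ZMod.intCast_eq_intCast_iff]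
    push_cast
    exact key i hi
  · rintro ⟨c, hc1, hc2, hcong⟩
    have hcz : ∀ i ∈ Finset.Icc 1 d, (b i : ZMod p) * (c : ZMod p) ^ i = (a i : ZMod p) := by
      intro i hi
      have := (ZMod.intCast_eq_intCast_iff _ _ _).mpr (hcong i hi)
      push_cast at this
      exact this
    have hcne : ((c : ℤ) : ZMod p) ≠ 0 := by
      rw [Ne, ZMod.intCast_zmod_eq_zero_iff_dvd]
      intro hdvd
      have := Int.le_of_dvd (by omega) hdvd
      omega
    set u := ((c : ℤ) : ZMod p)⁻¹ with hu
    have huc : ((c : ℤ) : ZMod p) * u = 1 := mul_inv_cancel₀ hcne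
    have hcz' : ∀ i ∈ Finset.Icc 1 d, (a i : ZMod p) * u ^ i = (b i : ZMod p) := by
      intro i hi
      rw [← hcz i hi, mul_assoc, ← mul_pow, huc, one_pow, mul_one]
    exact Set.Subset.antisymm (pset_subset p d hp0 a b ε _ hcz) (pset_subset p d hp0 b a ε u hcz')
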